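/- arXiv:1204.0037 — 3 statements merged into one kernel-verified Lean document; each statement's English description precedes it below -/
import Mathlib

section
/- Let A be an ω-homogeneous structure in a countable signature whose finitely generated substructures are finite, and let ≺ be a linear ordering on A such that (A,≺) is also ω-homogeneous. Set H = Aut(A) and H_≺ = Aut(A,≺). If Age(A,≺) satisfies the Ramsey property, then the pointed H-flow (cl(H·≺), ≺) is universal among H-ambits whose distinguished point is fixed by H_≺: for every compact Hausdorff space X with a continuous H-action and a point x₀ ∈ X with dense orbit such that H_≺·x₀ = {x₀}, there is a continuous surjective H-equivariant map φ : cl(H·≺) → X with φ(≺) = x₀. -/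
open FirstOrder FirstOrder.Language Topology

open Uniformity

universe u v w x

/-- The compact space of all (strict) linear orderings on `α`, viewed as a subspace of the
product space `Bool ^ (α × α)` (with `Bool` discrete). -/
abbrev LO (α : Type w) : Type w :=
  {r : α → α → Bool // IsStrictTotalOrder α (fun a b => r a b = true)}

/-- The natural action of a bijection on the space of linear orderings:
`a (g • r) b ↔ g⁻¹ a <_r g⁻¹ b`. -/
def permLO {α : Type w} (g : Equiv.Perm α) (r : LO α) : LO α :=
  ⟨fun a b => r.1 (g.symm a) (g.symm b), by
    haveI := r.2
    exact
      { trichotomous := fun a b hab hba => by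
          rcases trichotomous_of (fun x y => r.1 x y = true) (g.symm a) (g.symm b) with h | h | h
          · exact absurd h hab
          · exact g.symm.injective h
          · exact absurd h hba
        irrefl := fun a => irrefl_of (fun x y => r.1 x y = true) (g.symm a)
        trans := fun a b c hab hbc => trans_of (fun x y => r.1 x y = true) hab hbc }⟩

variable {L : FirstOrder.Language.{u, v}} {M : Type w} [L.Structure M]

/-- The automorphism group of a first-order structure. -/
instance autGroup : Group (M ≃[L] M) where
  mul f g := f.comp g
  one := Language.Equiv.refl L M
  inv f := f.symm
  mul_assoc _ _ _ := rfl
  one_mul := Language.Equiv.refl_comp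
  mul_one := Language.Equiv.comp_refl
  inv_mul_cancel := Language.Equiv.symm_comp_self

/-- The topology of pointwise convergence on the automorphism group of a structure. -/
instance autTopology : TopologicalSpace (M ≃[L] M) :=
  letI : TopologicalSpace M := ⊥
  TopologicalSpace.induced
    (fun g : M ≃[L] M => ((g : M → M), (g.symm : M → M))) inferInstance

/-- The orbit of a linear ordering under the full automorphism group `H = Aut(M)`. -/
def fullOrbitLO (L : FirstOrder.Language.{u, v}) (M : Type w) [L.Structure M] (r : LO M) :
    Set (LO M) :=
  Set.range fun g : M ≃[L] M => permLO g.toEquiv r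

/-- The linearly ordered structure `(M, ≺)` is `ω`-homogeneous. -/
def OrdUltrahomogeneous (L : FirstOrder.Language.{u, v}) (M : Type w) [L.Structure M]
    (prec : LO M) : Prop :=
  ∀ (S : L.Substructure M), S.FG → ∀ e : S ↪[L] M,
    (∀ x y : S, prec.1 x y = true ↔ prec.1 (e x) (e y) = true) →
    ∃ g : M ≃[L] M, (∀ a b : M, prec.1 (g a) (g b) = prec.1 a b) ∧ ∀ x : S, g x = e x

/-- `S'` is a copy of `S` in `(M, ≺)`: there is an isomorphism `S ≃ S'` preserving both the
structure and the ordering `≺`. -/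
def OrdIsoCopy (L : FirstOrder.Language.{u, v}) (M : Type w) [L.Structure M] (prec : LO M)
    (S S' : L.Substructure M) : Prop :=
  ∃ φ : S ≃[L] S', ∀ x y : S, prec.1 x y = true ↔ prec.1 (φ x) (φ y) = true

/-- The age of `(M, ≺)` satisfies the Ramsey property: for all finitely generated ordered
substructures `S ≤ T` of `(M, ≺)` and `k ≥ 2` there is a finitely generated substructure `C`
such that every `k`-colouring of the copies of `(S, ≺)` in `(C, ≺)` is constant on the copies of
`(S, ≺)` inside some copy of `(T, ≺)` in `(C, ≺)`. -/
def OrderedAgeRamsey (L : FirstOrder.Language.{u, v}) (M : Type w) [L.Structure M]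
    (prec : LO M) : Prop :=
  ∀ S T : L.Substructure M, S.FG → T.FG →
    (∃ e : S ↪[L] T, ∀ x y : S, prec.1 x y = true ↔ prec.1 (e x) (e y) = true) →
    ∀ k : ℕ, 2 ≤ k → ∃ C : L.Substructure M, C.FG ∧
      ∀ c : L.Substructure M → Fin k,
        ∃ T' : L.Substructure M, T' ≤ C ∧ OrdIsoCopy L M prec T T' ∧
          ∃ i : Fin k, ∀ S' : L.Substructure M, S' ≤ T' → OrdIsoCopy L M prec S S' → c S' = i


section KPTAux

lemma autMul_apply (g h : M ≃[L] M) (a : M) : (g * h) a = g (h a) := rfl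

lemma autInv_eq (g : M ≃[L] M) : g⁻¹ = g.symm := rfl

lemma autOne_apply (a : M) : (1 : M ≃[L] M) a = a := rfl

lemma permLO_one (r : LO M) : permLO (1 : M ≃[L] M).toEquiv r = r := rfl

lemma permLO_mul (g h : M ≃[L] M) (r : LO M) :
    permLO (g * h).toEquiv r = permLO g.toEquiv (permLO h.toEquiv r) := rfl

lemma continuous_permLO {α : Type w} (g : Equiv.Perm α) :
    Continuous fun r : LO α => permLO g r := by
  refine Continuous.subtype_mk (continuous_pi fun a => continuous_pi fun b => ?_) _
  exact (continuous_apply (g.symm b)).comp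
    ((continuous_apply (g.symm a)).comp continuous_subtype_val)

end KPTAux

section KPTAux2

lemma isClosed_eval3 {α : Type w} (P : Bool → Bool → Bool → Prop) (a b a' b' a'' b'' : α) :
    IsClosed {f : α → α → Bool | P (f a b) (f a' b') (f a'' b'')} := by
  have hc : Continuous fun f : α → α → Bool => ((f a b, f a' b'), f a'' b'') := by
    refine Continuous.prodMk (Continuous.prodMk ?_ ?_) ?_ <;>
      exact (continuous_apply _).comp (continuous_apply _)
  exact (isClosed_discrete {p : (Bool × Bool) × Bool | P p.1.1 p.1.2 p.2}).preimage hc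

lemma isClosed_LO_carrier (α : Type w) :
    IsClosed {f : α → α → Bool | IsStrictTotalOrder α fun a b => f a b = true} := by
  have heq : {f : α → α → Bool | IsStrictTotalOrder α fun a b => f a b = true} =
      (⋂ a : α, ⋂ b : α, ⋂ c : α,
        {f : α → α → Bool | f a b = true → f b c = true → f a c = true}) ∩
      ((⋂ a : α, {f : α → α → Bool | ¬ f a a = true}) ∩
       (⋂ a : α, ⋂ b : α, {f : α → α → Bool | f a b = true ∨ a = b ∨ f b a = true})) := by
    ext f
    simp only [Set.mem_setOf_eq, Set.mem_inter_iff, Set.mem_iInter]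
    constructor
    · intro h
      haveI := h
      exact ⟨fun a b c hab hbc => trans_of (fun x y => f x y = true) hab hbc,
        fun a => irrefl_of (fun x y => f x y = true) a,
        fun a b => trichotomous_of (fun x y => f x y = true) a b⟩
    · rintro ⟨ht, hirr, htr⟩
      exact { trichotomous := fun a b hab hba => by
                rcases htr a b with h | h | h
                · exact absurd h hab
                · exact h
                · exact absurd h hba,
              irrefl := fun a => hirr a,
              trans := fun a b c => ht a b c }
  rw [heq]
  refine IsClosed.inter ?_ (IsClosed.inter ?_ ?_)
  · exact isClosed_iInter fun a => isClosed_iInter fun b => isClosed_iInter fun c =>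
      isClosed_eval3 (fun x y z => x = true → y = true → z = true) a b b c a c
  · exact isClosed_iInter fun a =>
      isClosed_eval3 (fun x _ _ => ¬ x = true) a a a a a a
  · exact isClosed_iInter fun a => isClosed_iInter fun b =>
      isClosed_eval3 (fun x y _ => x = true ∨ a = b ∨ y = true) a b b a a b

instance (α : Type w) : CompactSpace (LO α) :=
  isCompact_iff_compactSpace.mp (isClosed_LO_carrier α).isCompact

lemma lo_agree_mem_nhds {α : Type w} (r : LO α) {G : Set α} (hG : G.Finite) :
    {s : LO α | ∀ a ∈ G, ∀ b ∈ G, s.1 a b = r.1 a b} ∈ 𝓝 r := by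
  have heq : {s : LO α | ∀ a ∈ G, ∀ b ∈ G, s.1 a b = r.1 a b} =
      ⋂ p ∈ G ×ˢ G, {s : LO α | s.1 p.1 p.2 = r.1 p.1 p.2} := by
    ext s
    simp only [Set.mem_setOf_eq, Set.mem_iInter, Set.mem_prod, Prod.forall]
    constructor
    · rintro h a b ⟨ha, hb⟩; exact h a ha b hb
    · intro h a ha b hb; exact h a b ⟨ha, hb⟩
  rw [heq]
  refine IsOpen.mem_nhds (Set.Finite.isOpen_biInter (hG.prod hG) fun p _ => ?_)
    (Set.mem_iInter₂.mpr fun p _ => rfl)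
  have hc : Continuous fun s : LO α => s.1 p.1 p.2 :=
    (continuous_apply p.2).comp ((continuous_apply p.1).comp continuous_subtype_val)
  exact (isOpen_discrete {x : Bool | x = r.1 p.1 p.2}).preimage hc

end KPTAux2

section KPTAux3

variable {L : FirstOrder.Language.{u, v}} {M : Type w} [L.Structure M]

lemma exists_fixing_nhd {U : Set (M ≃[L] M)} (hU : U ∈ 𝓝 (1 : M ≃[L] M)) :
    ∃ E : Set M, E.Finite ∧ ∀ v : M ≃[L] M, (∀ a ∈ E, v a = a) → v ∈ U := by
  letI : TopologicalSpace M := ⊥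
  haveI : DiscreteTopology M := ⟨rfl⟩
  set f : (M ≃[L] M) → (M → M) × (M → M) :=
    fun g => ((g : M → M), (g.symm : M → M)) with hf
  have h1 : U ∈ Filter.comap f (𝓝 (f 1)) := by
    rw [← nhds_induced]; exact hU
  obtain ⟨s, hs, hsU⟩ := Filter.mem_comap.mp h1
  rw [show f 1 = (((1 : M ≃[L] M) : M → M), ((1 : M ≃[L] M).symm : M → M)) from rfl,
    nhds_prod_eq] at hs
  obtain ⟨s₁, hs₁, s₂, hs₂, hsub⟩ := Filter.mem_prod_iff.mp hs
  rw [nhds_pi] at hs₁ hs₂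
  obtain ⟨I₁, hI₁, V₁, hV₁, hV₁s⟩ := Filter.mem_pi.mp hs₁
  obtain ⟨I₂, hI₂, V₂, hV₂, hV₂s⟩ := Filter.mem_pi.mp hs₂
  refine ⟨I₁ ∪ I₂, hI₁.union hI₂, fun v hv => ?_⟩
  have hvsymm : ∀ a ∈ I₁ ∪ I₂, v.symm a = a := by
    intro a ha
    conv_lhs => rw [← hv a ha]
    exact v.symm_apply_apply a
  apply hsU
  apply hsub
  constructor
  · apply hV₁s
    intro i hi
    have := hV₁ i
    rw [nhds_discrete, Filter.mem_pure] at this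
    show (v : M → M) i ∈ V₁ i
    rw [hv i (Set.mem_union_left _ hi)]
    exact this
  · apply hV₂s
    intro i hi
    have := hV₂ i
    rw [nhds_discrete, Filter.mem_pure] at this
    show (v.symm : M → M) i ∈ V₂ i
    rw [hvsymm i (Set.mem_union_right _ hi)]
    exact this

lemma keyB {X : Type x} [UniformSpace X] [CompactSpace X]
    [MulAction (M ≃[L] M) X] [ContinuousSMul (M ≃[L] M) X]
    {W : Set (X × X)} (hW : W ∈ 𝓤 X) :
    ∃ E : Set M, E.Finite ∧
      ∀ v : M ≃[L] M, (∀ a ∈ E, v a = a) → ∀ x : X, (v • x, x) ∈ W := by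
  obtain ⟨W', ⟨hW', hWo⟩, hsub⟩ := uniformity_hasBasis_open.mem_iff.mp hW
  set F : (M ≃[L] M) × X → X × X := fun p => (p.1 • p.2, p.2) with hF
  have hFc : Continuous F := continuous_smul.prodMk continuous_snd
  have hmem : ({1} : Set (M ≃[L] M)) ×ˢ (Set.univ : Set X) ⊆ F ⁻¹' W' := by
    rintro ⟨g, x⟩ ⟨hg, -⟩
    have : g = 1 := hg
    subst this
    simp only [Set.mem_preimage, hF, one_smul]
    exact refl_mem_uniformity hW'
  obtain ⟨u, v, huo, -, h1u, hunivv, huv⟩ :=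
    generalized_tube_lemma isCompact_singleton isCompact_univ (hWo.preimage hFc) hmem
  obtain ⟨E, hEfin, hE⟩ := exists_fixing_nhd (huo.mem_nhds (h1u rfl))
  refine ⟨E, hEfin, fun w hw x => ?_⟩
  have hmem2 : (w, x) ∈ F ⁻¹' W' := huv ⟨hE w hw, hunivv (Set.mem_univ x)⟩
  exact hsub hmem2

end KPTAux3

section KPTAux4

variable {L : FirstOrder.Language.{u, v}} {M : Type w} [L.Structure M]

lemma keyHom (prec : LO M) (hfin : ∀ S : L.Substructure M, S.FG → Finite S)
    (hohom : OrdUltrahomogeneous L M prec) {E : Set M} (hE : E.Finite) :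
    ∃ G : Set M, G.Finite ∧ E ⊆ G ∧ ∀ g h : M ≃[L] M,
      (∀ a ∈ G, ∀ b ∈ G,
        (permLO g.toEquiv prec).1 a b = (permLO h.toEquiv prec).1 a b) →
      ∃ k : M ≃[L] M, (∀ a b : M, prec.1 (k a) (k b) = prec.1 a b) ∧
        ∀ a ∈ G, (h * k) (g.symm a) = a := by
  set Gs : L.Substructure M := Substructure.closure L E with hGs
  have hGsfg : Gs.FG := Substructure.fg_closure hE
  haveI : Finite Gs := hfin Gs hGsfg
  refine ⟨(Gs : Set M), Set.finite_coe_iff.mp (by infer_instance),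
    Substructure.subset_closure, fun g h hagree => ?_⟩
  set S : L.Substructure M := Gs.map g.symm.toHom with hS
  have hSfg : S.FG := hGsfg.map _
  set e : S ↪[L] M := (h.symm.toEmbedding.comp g.toEmbedding).comp S.subtype with he
  have hmem : ∀ x : S, ∃ a, a ∈ Gs ∧ g.symm a = (x : M) := by
    intro x
    exact Substructure.mem_map.mp x.2
  have horder : ∀ x y : S, prec.1 x y = true ↔ prec.1 (e x) (e y) = true := by
    intro x y
    obtain ⟨a, ha, hax⟩ := hmem x
    obtain ⟨b, hb, hby⟩ := hmem y
    have hex : e x = h.symm a := by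
      show h.symm (g (x : M)) = h.symm a
      rw [← hax, Language.Equiv.apply_symm_apply]
    have hey : e y = h.symm b := by
      show h.symm (g (y : M)) = h.symm b
      rw [← hby, Language.Equiv.apply_symm_apply]
    rw [hex, hey, ← hax, ← hby]
    have := hagree a ha b hb
    rw [show (permLO g.toEquiv prec).1 a b = prec.1 (g.symm a) (g.symm b) from rfl,
      show (permLO h.toEquiv prec).1 a b = prec.1 (h.symm a) (h.symm b) from rfl] at this
    rw [this]
  obtain ⟨k, hk1, hk2⟩ := hohom S hSfg e horder
  refine ⟨k, hk1, fun a ha => ?_⟩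
  have hmemS : g.symm a ∈ S := Substructure.mem_map.mpr ⟨a, ha, rfl⟩
  have : k (g.symm a) = e ⟨g.symm a, hmemS⟩ := hk2 ⟨g.symm a, hmemS⟩
  rw [autMul_apply, this]
  show h (h.symm (g (g.symm a))) = a
  rw [Language.Equiv.apply_symm_apply, Language.Equiv.apply_symm_apply]

end KPTAux4
/-- Kechris–Pestov–Todorcevic universality: if `(A, ≺)` is an `ω`-homogeneous linearly ordered
structure (over an `ω`-homogeneous `A`) whose finitely generated substructures are finite and
whose age satisfies the Ramsey property, then the pointed flow `(cl(H·≺), ≺)` is universal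
among `H`-ambits whose base point is fixed by `H_≺ = Aut(A, ≺)`, where `H = Aut(A)`. -/
theorem orbit_closure_universal_ambit (hL : L.card ≤ Cardinal.aleph0)
    (hhom : L.IsUltrahomogeneous M)
    (hfin : ∀ S : L.Substructure M, S.FG → Finite S)
    (prec : LO M) (hohom : OrdUltrahomogeneous L M prec)
    (hramsey : OrderedAgeRamsey L M prec)
    (X : Type x) [TopologicalSpace X] [CompactSpace X] [T2Space X] [Nonempty X]
    [MulAction (M ≃[L] M) X] [ContinuousSMul (M ≃[L] M) X]
    (x₀ : X) (hdense : Dense (MulAction.orbit (M ≃[L] M) x₀))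
    (hfix : ∀ g : M ≃[L] M, (∀ a b : M, prec.1 (g a) (g b) = prec.1 a b) → g • x₀ = x₀) :
    ∃ φ : closure (fullOrbitLO L M prec) → X,
      Continuous φ ∧ Function.Surjective φ ∧
      (∀ (g : M ≃[L] M) (r : LO M) (hr : r ∈ closure (fullOrbitLO L M prec))
          (hgr : permLO g.toEquiv r ∈ closure (fullOrbitLO L M prec)),
        φ ⟨permLO g.toEquiv r, hgr⟩ = g • φ ⟨r, hr⟩) ∧
      ∀ hp : prec ∈ closure (fullOrbitLO L M prec), φ ⟨prec, hp⟩ = x₀ := by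
  classical
  letI : UniformSpace X := uniformSpaceOfCompactR1
  set ψ : (M ≃[L] M) → X := fun g => g • x₀ with hψ
  set ρ : (M ≃[L] M) → LO M := fun g => permLO g.toEquiv prec with hρdef
  have hrange : fullOrbitLO L M prec = Set.range ρ := rfl
  haveI : CompactSpace (closure (fullOrbitLO L M prec)) :=
    isCompact_iff_compactSpace.mp isClosed_closure.isCompact
  -- Uniform continuity of `ψ` relative to `ρ`.
  have keyC : ∀ W ∈ 𝓤 X, ∃ G : Set M, G.Finite ∧ ∀ g h : M ≃[L] M,
      (∀ a ∈ G, ∀ b ∈ G, (ρ g).1 a b = (ρ h).1 a b) → (ψ g, ψ h) ∈ W := by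
    intro W hW
    obtain ⟨E, hEfin, hE⟩ := keyB (L := L) (M := M) hW
    obtain ⟨G, hGfin, hEG, hkey⟩ := keyHom prec hfin hohom hEfin
    refine ⟨G, hGfin, fun g h hagree => ?_⟩
    obtain ⟨k, hk1, hk2⟩ := hkey h g (fun a ha b hb => (hagree a ha b hb).symm)
    have hgk : (g * k) • x₀ = ψ g := by rw [mul_smul, hfix k hk1]
    set vv : M ≃[L] M := (g * k) * h⁻¹ with hvv
    have hvfix : ∀ a ∈ E, vv a = a := by
      intro a ha
      have hva : vv a = (g * k) (h.symm a) := rfl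
      rw [hva, hk2 a (hEG ha)]
    have hmain := hE vv hvfix (h • x₀)
    have hv1 : vv • (h • x₀) = ψ g := by
      rw [← mul_smul, hvv, inv_mul_cancel_right]
      exact hgk
    rw [hv1] at hmain
    exact hmain
  -- Choice of an ultrafilter and a limit point for every element of the orbit closure.
  have hchoice : ∀ r : closure (fullOrbitLO L M prec),
      ∃ (F : Ultrafilter (M ≃[L] M)) (x : X),
        Filter.Tendsto ρ F (𝓝 (r : LO M)) ∧ Filter.Tendsto ψ F (𝓝 x) := by
    intro r
    have hr : (r : LO M) ∈ closure (Set.range ρ) := by rw [← hrange]; exact r.2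
    have hne : (Filter.comap ρ (𝓝 (r : LO M))).NeBot := by
      rw [Filter.comap_neBot_iff]
      intro t ht
      obtain ⟨y, hyt, g, hg⟩ := mem_closure_iff_nhds.mp hr t ht
      exact ⟨g, by rwa [hg]⟩
    set F : Ultrafilter (M ≃[L] M) := Ultrafilter.of (Filter.comap ρ (𝓝 (r : LO M))) with hF
    have hρF : Filter.Tendsto ρ F (𝓝 (r : LO M)) :=
      le_trans (Filter.map_mono (Ultrafilter.of_le _)) Filter.map_comap_le
    obtain ⟨x, -, hx⟩ := isCompact_univ.ultrafilter_le_nhds (F.map ψ)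
      (by rw [Filter.le_principal_iff]; exact Filter.univ_mem)
    exact ⟨F, x, hρF, by rwa [Ultrafilter.coe_map] at hx⟩
  choose U φ hU hφ using hchoice
  -- The master uniqueness lemma.
  have master : ∀ (F G' : Ultrafilter (M ≃[L] M)) (r : LO M) (x y : X),
      Filter.Tendsto ρ F (𝓝 r) → Filter.Tendsto ψ F (𝓝 x) →
      Filter.Tendsto ρ G' (𝓝 r) → Filter.Tendsto ψ G' (𝓝 y) → x = y := by
    intro F G' r x y hFρ hFψ hGρ hGψ
    refine eq_of_uniformity fun {W} hW => ?_
    obtain ⟨W', hW', hWsymm, hWsub⟩ := comp_comp_symm_mem_uniformity_sets hW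
    obtain ⟨G, hGfin, hG⟩ := keyC W' hW'
    have hA := Filter.mem_map.mp (hFρ (lo_agree_mem_nhds r hGfin))
    have hA' := Filter.mem_map.mp (hGρ (lo_agree_mem_nhds r hGfin))
    have hB := Filter.mem_map.mp (hFψ (UniformSpace.ball_mem_nhds x hW'))
    have hB' := Filter.mem_map.mp (hGψ (UniformSpace.ball_mem_nhds y hW'))
    obtain ⟨g, hg1, hg2⟩ := Filter.nonempty_of_mem (Filter.inter_mem hA hB)
    obtain ⟨h, hh1, hh2⟩ := Filter.nonempty_of_mem (Filter.inter_mem hA' hB')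
    have h1 : (x, ψ g) ∈ W' := hg2
    have h2 : (ψ g, ψ h) ∈ W' :=
      hG g h fun a ha b hb => (hg1 a ha b hb).trans (hh1 a ha b hb).symm
    have h3 : (ψ h, y) ∈ W' := hWsymm.symm _ _ hh2
    exact hWsub ⟨ψ h, ⟨ψ g, h1, h2⟩, h3⟩
  refine ⟨fun r => φ r, ?_, ?_, ?_, ?_⟩
  · -- continuity
    rw [continuous_iff_continuousAt]
    intro r₀
    rw [ContinuousAt, Filter.tendsto_def]
    intro N hN
    obtain ⟨W, hW, hball⟩ := UniformSpace.mem_nhds_iff.mp hN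
    obtain ⟨W', hW', hWsymm, hWsub⟩ := comp_comp_symm_mem_uniformity_sets hW
    obtain ⟨G, hGfin, hG⟩ := keyC W' hW'
    have hclaim : ∀ r : closure (fullOrbitLO L M prec),
        (∀ a ∈ G, ∀ b ∈ G, (r : LO M).1 a b = (r₀ : LO M).1 a b) →
        (φ r₀, φ r) ∈ W := by
      intro r hragree
      have hA := Filter.mem_map.mp (hU r₀ (lo_agree_mem_nhds (r₀ : LO M) hGfin))
      have hA' := Filter.mem_map.mp (hU r (lo_agree_mem_nhds (r : LO M) hGfin))
      have hB := Filter.mem_map.mp (hφ r₀ (UniformSpace.ball_mem_nhds (φ r₀) hW'))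
      have hB' := Filter.mem_map.mp (hφ r (UniformSpace.ball_mem_nhds (φ r) hW'))
      obtain ⟨g, hg1, hg2⟩ := Filter.nonempty_of_mem (Filter.inter_mem hA hB)
      obtain ⟨h, hh1, hh2⟩ := Filter.nonempty_of_mem (Filter.inter_mem hA' hB')
      have h1 : (φ r₀, ψ g) ∈ W' := hg2
      have h2 : (ψ g, ψ h) ∈ W' :=
        hG g h fun a ha b hb =>
          (hg1 a ha b hb).trans ((hh1 a ha b hb).trans (hragree a ha b hb)).symm
      have h3 : (ψ h, φ r) ∈ W' := hWsymm.symm _ _ hh2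
      exact hWsub ⟨ψ h, ⟨ψ g, h1, h2⟩, h3⟩
    have hnb := Filter.mem_map.mp
      (continuous_subtype_val.continuousAt.tendsto (lo_agree_mem_nhds (r₀ : LO M) hGfin))
    exact Filter.mem_of_superset hnb fun r hragree => hball (hclaim r hragree)
  · -- surjectivity
    intro x
    have hxcl : x ∈ closure (Set.range ψ) := by
      have hd := hdense x
      rwa [show MulAction.orbit (M ≃[L] M) x₀ = Set.range ψ from rfl] at hd
    have hne : (Filter.comap ψ (𝓝 x)).NeBot := by
      rw [Filter.comap_neBot_iff]
      intro t ht
      obtain ⟨y, hyt, g, hg⟩ := mem_closure_iff_nhds.mp hxcl t ht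
      exact ⟨g, by rwa [hg]⟩
    set F : Ultrafilter (M ≃[L] M) := Ultrafilter.of (Filter.comap ψ (𝓝 x)) with hF
    have hFψ : Filter.Tendsto ψ F (𝓝 x) :=
      le_trans (Filter.map_mono (Ultrafilter.of_le _)) Filter.map_comap_le
    set ρ' : (M ≃[L] M) → closure (fullOrbitLO L M prec) :=
      fun g => ⟨ρ g, subset_closure ⟨g, rfl⟩⟩ with hρ'
    obtain ⟨r, -, hr⟩ := isCompact_univ.ultrafilter_le_nhds (F.map ρ')
      (by rw [Filter.le_principal_iff]; exact Filter.univ_mem)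
    have h1 : Filter.Tendsto ρ' F (𝓝 r) := by rwa [Ultrafilter.coe_map] at hr
    have hFρ : Filter.Tendsto ρ F (𝓝 (r : LO M)) :=
      (continuous_subtype_val.tendsto r).comp h1
    exact ⟨r, master (U r) F (r : LO M) (φ r) x (hU r) (hφ r) hFρ hFψ⟩
  · -- equivariance
    intro g r hr hgr
    have hmap : Filter.Tendsto ρ ((U ⟨r, hr⟩).map (fun h => g * h))
        (𝓝 (permLO g.toEquiv r)) := by
      rw [Ultrafilter.coe_map, Filter.tendsto_map'_iff]
      have hcomp : (ρ ∘ fun h => g * h) = fun h => permLO g.toEquiv (ρ h) := by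
        funext h; exact permLO_mul g h prec
      rw [hcomp]
      exact ((continuous_permLO g.toEquiv).tendsto (r : LO M)).comp (hU ⟨r, hr⟩)
    have hmapψ : Filter.Tendsto ψ ((U ⟨r, hr⟩).map (fun h => g * h))
        (𝓝 (g • φ ⟨r, hr⟩)) := by
      rw [Ultrafilter.coe_map, Filter.tendsto_map'_iff]
      have hcomp : (ψ ∘ fun h => g * h) = fun h => g • ψ h := by
        funext h; exact mul_smul g h x₀
      rw [hcomp]
      exact ((continuous_const_smul g).tendsto (φ ⟨r, hr⟩)).comp (hφ ⟨r, hr⟩)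
    exact master (U ⟨permLO g.toEquiv r, hgr⟩) _ (permLO g.toEquiv r) _ _
      (hU ⟨permLO g.toEquiv r, hgr⟩) (hφ _) hmap hmapψ
  · -- base point
    intro hp
    have h1 : Filter.Tendsto ρ (pure 1 : Ultrafilter (M ≃[L] M)) (𝓝 prec) := by
      have hone : ρ 1 = prec := permLO_one prec
      have ht : Filter.Tendsto ρ (pure (1 : M ≃[L] M) : Filter (M ≃[L] M)) (𝓝 (ρ 1)) :=
        tendsto_pure_nhds ρ 1
      rw [hone] at ht
      exact ht
    have h2 : Filter.Tendsto ψ (pure 1 : Ultrafilter (M ≃[L] M)) (𝓝 x₀) := by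
      have hone : ψ 1 = x₀ := one_smul _ x₀
      have ht : Filter.Tendsto ψ (pure (1 : M ≃[L] M) : Filter (M ≃[L] M)) (𝓝 (ψ 1)) :=
        tendsto_pure_nhds ψ 1
      rw [hone] at ht
      exact ht
    exact master (U ⟨prec, hp⟩) (pure 1) prec (φ ⟨prec, hp⟩) x₀
      (hU ⟨prec, hp⟩) (hφ ⟨prec, hp⟩) h1 h2
end

section
/- For every n ∈ ℕ, the class of K_n-free simple graphs (of arbitrary cardinality) has the amalgamation property: given K_n-free graphs A, B, C and graph embeddings f : A → B and g : A → C, the free amalgam D (the quotient of the disjoint union of B and C identifying f(a) with g(a) for a ∈ A, with adjacency the union of the adjacencies of B and C) is K_n-free, and the canonical embeddings k : B → D, l : C → D satisfy k ∘ f = l ∘ g. -/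
universe u v w

/-- The relation on the disjoint union of `β` and `γ` identifying `f a` with `g a` for `a : α`. -/
def amalgRel {α : Type u} {β : Type v} {γ : Type w} (f : α → β) (g : α → γ) :
    β ⊕ γ → β ⊕ γ → Prop := fun x y =>
  x = y ∨ (∃ a, x = Sum.inl (f a) ∧ y = Sum.inr (g a)) ∨
    (∃ a, x = Sum.inr (g a) ∧ y = Sum.inl (f a))

/-- The amalgamated set: the quotient of the disjoint union of `β` and `γ` identifying
`f a` with `g a` for each `a : α`. -/
def Amalg {α : Type u} {β : Type v} {γ : Type w} (f : α → β) (g : α → γ) :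
    Type (max v w) := Quot (amalgRel f g)

/-- The canonical map `β → Amalg f g`. -/
def amalgInl {α : Type u} {β : Type v} {γ : Type w} (f : α → β) (g : α → γ) (b : β) :
    Amalg f g := Quot.mk _ (Sum.inl b)

/-- The canonical map `γ → Amalg f g`. -/
def amalgInr {α : Type u} {β : Type v} {γ : Type w} (f : α → β) (g : α → γ) (c : γ) :
    Amalg f g := Quot.mk _ (Sum.inr c)

/-- The adjacency relation of the free amalgam: two vertices are adjacent if and only if their
preimages are adjacent in `B` or adjacent in `C`. -/
def amalgAdj {α : Type u} {β : Type v} {γ : Type w} (f : α → β) (g : α → γ)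
    (B : SimpleGraph β) (C : SimpleGraph γ) : Amalg f g → Amalg f g → Prop := fun x y =>
  (∃ b b', x = amalgInl f g b ∧ y = amalgInl f g b' ∧ B.Adj b b') ∨
    (∃ c c', x = amalgInr f g c ∧ y = amalgInr f g c' ∧ C.Adj c c')

namespace AmalgAux

variable {α : Type u} {β : Type v} {γ : Type w} {f : α → β} {g : α → γ}

open Classical in
noncomputable def norm (f : α → β) (g : α → γ) : β ⊕ γ → β ⊕ γ := fun x =>
  match x with
  | Sum.inl b => Sum.inl b
  | Sum.inr c => if h : ∃ a, g a = c then Sum.inl (f h.choose) else Sum.inr c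

theorem norm_respects (hg : Function.Injective g) :
    ∀ x y, amalgRel f g x y → norm f g x = norm f g y := by
  rintro x y (rfl | ⟨a, rfl, rfl⟩ | ⟨a, rfl, rfl⟩) <;>
  · first
    | rfl
    | (have h : ∃ a', g a' = g a := ⟨a, rfl⟩
       have ha : h.choose = a := hg h.choose_spec
       simp [norm, h, ha])

noncomputable def normQ (hg : Function.Injective g) : Amalg f g → β ⊕ γ :=
  Quot.lift (norm f g) (norm_respects hg)

theorem normQ_inl (hg : Function.Injective g) (b : β) :
    normQ hg (amalgInl f g b) = Sum.inl b := rfl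

theorem normQ_inr (hg : Function.Injective g) (c : γ) :
    normQ hg (amalgInr f g c) = norm f g (Sum.inr c) := rfl

theorem inl_injective (hg : Function.Injective g) :
    Function.Injective (amalgInl f g) := fun b b' h =>
  Sum.inl.inj (by
    have := congrArg (normQ hg) h
    rwa [normQ_inl, normQ_inl] at this)

theorem inr_injective (hf : Function.Injective f) (hg : Function.Injective g) :
    Function.Injective (amalgInr f g) := by
  intro c c' h
  have h2 := congrArg (normQ hg) h
  rw [normQ_inr, normQ_inr] at h2
  by_cases h1 : ∃ a, g a = c <;> by_cases h1' : ∃ a, g a = c' <;>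
    simp [norm, h1, h1'] at h2
  · rw [← h1.choose_spec, ← h1'.choose_spec, hf h2]
  · exact h2

theorem inl_eq_inr (hg : Function.Injective g) {b : β} {c : γ}
    (h : amalgInl f g b = amalgInr f g c) : ∃ a, b = f a ∧ c = g a := by
  have h2 := congrArg (normQ hg) h
  rw [normQ_inl, normQ_inr] at h2
  by_cases h1 : ∃ a, g a = c
  · refine ⟨h1.choose, ?_, h1.choose_spec.symm⟩
    simpa [norm, h1] using h2
  · simp [norm, h1] at h2

theorem adj_inl_inl {A : SimpleGraph α} {B : SimpleGraph β} {C : SimpleGraph γ}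
    (hg : Function.Injective g)
    (hfe : ∀ x y : α, B.Adj (f x) (f y) ↔ A.Adj x y)
    (hge : ∀ x y : α, C.Adj (g x) (g y) ↔ A.Adj x y)
    {b b' : β} :
    amalgAdj f g B C (amalgInl f g b) (amalgInl f g b') ↔ B.Adj b b' := by
  constructor
  · rintro (⟨b₁, b₂, h1, h2, hadj⟩ | ⟨c₁, c₂, h1, h2, hadj⟩)
    · rwa [inl_injective hg h1, inl_injective hg h2]
    · obtain ⟨a, hb, hc⟩ := inl_eq_inr hg h1
      obtain ⟨a', hb', hc'⟩ := inl_eq_inr hg h2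
      rw [hb, hb', hfe]
      rw [hc, hc', hge] at hadj
      exact hadj
  · intro h; exact Or.inl ⟨b, b', rfl, rfl, h⟩

theorem adj_inr_inr {A : SimpleGraph α} {B : SimpleGraph β} {C : SimpleGraph γ}
    (hf : Function.Injective f) (hg : Function.Injective g)
    (hfe : ∀ x y : α, B.Adj (f x) (f y) ↔ A.Adj x y)
    (hge : ∀ x y : α, C.Adj (g x) (g y) ↔ A.Adj x y)
    {c c' : γ} :
    amalgAdj f g B C (amalgInr f g c) (amalgInr f g c') ↔ C.Adj c c' := by
  constructor
  · rintro (⟨b₁, b₂, h1, h2, hadj⟩ | ⟨c₁, c₂, h1, h2, hadj⟩)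
    · obtain ⟨a, hb, hc⟩ := inl_eq_inr hg h1.symm
      obtain ⟨a', hb', hc'⟩ := inl_eq_inr hg h2.symm
      rw [hc, hc', hge]
      rw [hb, hb', hfe] at hadj
      exact hadj
    · rwa [inr_injective hf hg h1, inr_injective hf hg h2]
  · intro h; exact Or.inr ⟨c, c', rfl, rfl, h⟩

end AmalgAux

/-- For every `n`, the class of `K_n`-free simple graphs has the amalgamation property: the
free amalgam of `K_n`-free graphs over graph embeddings `f : A → B`, `g : A → C` is a
`K_n`-free simple graph, and the canonical maps `k : B → D`, `l : C → D` are graph embeddings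
with `k ∘ f = l ∘ g`. -/
theorem knFree_free_amalgamation {α : Type u} {β : Type v} {γ : Type w} (n : ℕ)
    (A : SimpleGraph α) (B : SimpleGraph β) (C : SimpleGraph γ)
    (hA : A.CliqueFree n) (hB : B.CliqueFree n) (hC : C.CliqueFree n)
    (f : α → β) (hf : Function.Injective f) (hfe : ∀ x y : α, B.Adj (f x) (f y) ↔ A.Adj x y)
    (g : α → γ) (hg : Function.Injective g) (hge : ∀ x y : α, C.Adj (g x) (g y) ↔ A.Adj x y) :
    Symmetric (amalgAdj f g B C) ∧ Irreflexive (amalgAdj f g B C) ∧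
    (¬ ∃ φ : Fin n → Amalg f g, Function.Injective φ ∧
      ∀ i j : Fin n, i ≠ j → amalgAdj f g B C (φ i) (φ j)) ∧
    Function.Injective (amalgInl f g) ∧
    (∀ b b' : β, amalgAdj f g B C (amalgInl f g b) (amalgInl f g b') ↔ B.Adj b b') ∧
    Function.Injective (amalgInr f g) ∧
    (∀ c c' : γ, amalgAdj f g B C (amalgInr f g c) (amalgInr f g c') ↔ C.Adj c c') ∧
    (∀ a : α, amalgInl f g (f a) = amalgInr f g (g a)) := by
  have hsymm : Symmetric (amalgAdj f g B C) := by
    rintro x y (⟨b, b', h1, h2, hadj⟩ | ⟨c, c', h1, h2, hadj⟩)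
    · exact Or.inl ⟨b', b, h2, h1, hadj.symm⟩
    · exact Or.inr ⟨c', c, h2, h1, hadj.symm⟩
  have hirr : Irreflexive (amalgAdj f g B C) := by
    rintro x (⟨b, b', h1, h2, hadj⟩ | ⟨c, c', h1, h2, hadj⟩)
    · rw [h1] at h2
      rw [AmalgAux.inl_injective hg h2] at hadj
      exact hadj.ne rfl
    · rw [h1] at h2
      rw [AmalgAux.inr_injective hf hg h2] at hadj
      exact hadj.ne rfl
  refine ⟨hsymm, hirr, ?_, AmalgAux.inl_injective hg,
    fun b b' => AmalgAux.adj_inl_inl hg hfe hge,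
    AmalgAux.inr_injective hf hg,
    fun c c' => AmalgAux.adj_inr_inr hf hg hfe hge,
    fun a => Quot.sound (Or.inr (Or.inl ⟨a, rfl, rfl⟩))⟩
  rintro ⟨φ, hinj, hadj⟩
  by_cases hall : ∀ i, ∃ c, φ i = amalgInr f g c
  · choose ψ hψ using hall
    have hψinj : Function.Injective ψ := fun i j h =>
      hinj (by rw [hψ i, hψ j, h])
    refine (SimpleGraph.cliqueFree_iff.mp hC).elim (SimpleGraph.Embedding.toCopy ⟨⟨ψ, hψinj⟩, ?_⟩)
    intro i j
    simp only [Function.Embedding.coeFn_mk, SimpleGraph.top_adj]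
    constructor
    · intro h
      intro hij; subst hij; exact h.ne rfl
    · intro hij
      have := hadj i j hij
      rw [hψ i, hψ j] at this
      exact (AmalgAux.adj_inr_inr hf hg hfe hge).mp this
  · push_neg at hall
    obtain ⟨i₀, hi₀⟩ := hall
    have hall' : ∀ i, ∃ b, φ i = amalgInl f g b := by
      intro i
      by_cases hii : i = i₀
      · subst hii
        obtain ⟨x, hx⟩ := Quot.exists_rep (φ i)
        cases x with
        | inl b => exact ⟨b, hx.symm⟩
        | inr c => exact absurd hx.symm (hi₀ c)
      · rcases hadj i₀ i (Ne.symm hii) with ⟨b, b', h1, h2, _⟩ | ⟨c, c', h1, _, _⟩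
        · exact ⟨b', h2⟩
        · exact absurd h1 (hi₀ c)
    choose ψ hψ using hall'
    have hψinj : Function.Injective ψ := fun i j h =>
      hinj (by rw [hψ i, hψ j, h])
    refine (SimpleGraph.cliqueFree_iff.mp hB).elim (SimpleGraph.Embedding.toCopy ⟨⟨ψ, hψinj⟩, ?_⟩)
    intro i j
    simp only [Function.Embedding.coeFn_mk, SimpleGraph.top_adj]
    constructor
    · intro h hij; subst hij; exact h.ne rfl
    · intro hij
      have := hadj i j hij
      rw [hψ i, hψ j] at this
      exact (AmalgAux.adj_inl_inl hg hfe hge).mp this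
end

section
/- The class of linearly ordered posets — structures (P, ≺, <) where ≺ is a partial order and < is a linear order extending ≺ — has the amalgamation property (with respect to embeddings preserving both orders): given such structures (A,≺_A,<_A), (B,≺_B,<_B), (C,≺_C,<_C) and embeddings f : A → B, g : A → C, there exists a structure (D,≺_D,<_D) in the class and embeddings k : B → D, l : C → D with k ∘ f = l ∘ g, where ≺_D is the transitive closure of the union of the images of ≺_B and ≺_C on the amalgamated set, and <_D is a linear order extending ≺_D as well as the images of <_B and <_C. -/
universe u v w

/-- The relation on the amalgamated set induced by relations on `β` and on `γ`. -/
def amalgOrd {α : Type u} {β : Type v} {γ : Type w} (f : α → β) (g : α → γ)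
    (pB : β → β → Prop) (pC : γ → γ → Prop) : Amalg f g → Amalg f g → Prop := fun x y =>
  (∃ b b', x = amalgInl f g b ∧ y = amalgInl f g b' ∧ pB b b') ∨
    (∃ c c', x = amalgInr f g c ∧ y = amalgInr f g c' ∧ pC c c')

section Aux

variable {α : Type u} {β : Type v} {γ : Type w} {f : α → β} {g : α → γ}
  {sB : β → β → Prop} {sC : γ → γ → Prop}

/-- The completed relation on the sum. -/
def auxT (f : α → β) (g : α → γ) (sB : β → β → Prop) (sC : γ → γ → Prop) :
    β ⊕ γ → β ⊕ γ → Prop := fun x y =>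
  match x, y with
  | .inl b, .inl b' => sB b b'
  | .inl b, .inr c' => ∃ a, (sB b (f a) ∧ (sC (g a) c' ∨ g a = c')) ∨
      ((sB b (f a) ∨ b = f a) ∧ sC (g a) c')
  | .inr c, .inl b' => ∃ a, (sC c (g a) ∧ (sB (f a) b' ∨ f a = b')) ∨
      ((sC c (g a) ∨ c = g a) ∧ sB (f a) b')
  | .inr c, .inr c' => sC c c'

theorem amalgRel_equivalence (hf : Function.Injective f) (hg : Function.Injective g) :
    Equivalence (amalgRel f g) := by
  constructor
  · intro x; exact Or.inl rfl
  · rintro x y (rfl | ⟨a, rfl, rfl⟩ | ⟨a, rfl, rfl⟩)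
    · exact Or.inl rfl
    · exact Or.inr (Or.inr ⟨a, rfl, rfl⟩)
    · exact Or.inr (Or.inl ⟨a, rfl, rfl⟩)
  · rintro x y z (rfl | ⟨a, rfl, rfl⟩ | ⟨a, rfl, rfl⟩) h
    · exact h
    · rcases h with rfl | ⟨a', h1, h2⟩ | ⟨a', h1, rfl⟩
      · exact Or.inr (Or.inl ⟨a, rfl, rfl⟩)
      · exact absurd h1 (by simp)
      · rw [hg (Sum.inr.inj h1)]; exact Or.inl rfl
    · rcases h with rfl | ⟨a', h1, rfl⟩ | ⟨a', h1, h2⟩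
      · exact Or.inr (Or.inr ⟨a, rfl, rfl⟩)
      · rw [hf (Sum.inl.inj h1)]; exact Or.inl rfl
      · exact absurd h1 (by simp)


theorem auxT_trans (hf : Function.Injective f) (hg : Function.Injective g)
    (htB : Transitive sB) (htC : Transitive sC)
    (hBC : ∀ x y, sB (f x) (f y) ↔ sC (g x) (g y)) :
    ∀ x y z, auxT f g sB sC x y → auxT f g sB sC y z → auxT f g sB sC x z := by
  have lB1 : ∀ {x y z}, sB x y → (sB y z ∨ y = z) → sB x z := fun h h' =>
    h'.elim (htB h) (fun e => e ▸ h)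
  have lB2 : ∀ {x y z}, (sB x y ∨ x = y) → sB y z → sB x z := fun h h' =>
    h.elim (fun h => htB h h') (fun e => e ▸ h')
  have lC1 : ∀ {x y z}, sC x y → (sC y z ∨ y = z) → sC x z := fun h h' =>
    h'.elim (htC h) (fun e => e ▸ h)
  have lC2 : ∀ {x y z}, (sC x y ∨ x = y) → sC y z → sC x z := fun h h' =>
    h.elim (fun h => htC h h') (fun e => e ▸ h')
  have lB3 : ∀ {x y z}, (sB x y ∨ x = y) → (sB y z ∨ y = z) → (sB x z ∨ x = z) := fun h h' =>
    h.elim (fun h => Or.inl (lB1 h h')) (fun e => e ▸ h')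
  have lC3 : ∀ {x y z}, (sC x y ∨ x = y) → (sC y z ∨ y = z) → (sC x z ∨ x = z) := fun h h' =>
    h.elim (fun h => Or.inl (lC1 h h')) (fun e => e ▸ h')
  have wBC : ∀ {x y}, (sB (f x) (f y) ∨ f x = f y) → (sC (g x) (g y) ∨ g x = g y) := fun h =>
    h.imp (fun h => (hBC _ _).mp h) (fun e => congrArg g (hf e))
  have wCB : ∀ {x y}, (sC (g x) (g y) ∨ g x = g y) → (sB (f x) (f y) ∨ f x = f y) := fun h =>
    h.imp (fun h => (hBC _ _).mpr h) (fun e => congrArg f (hg e))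
  rintro (b | c) (b' | c') (b'' | c'') h h' <;> simp only [auxT] at *
  · exact htB h h'
  · -- ll-lr
    obtain ⟨a, ⟨h1, h2⟩ | ⟨h1, h2⟩⟩ := h'
    · exact ⟨a, Or.inl ⟨htB h h1, h2⟩⟩
    · exact ⟨a, Or.inr ⟨Or.inl (lB1 h h1), h2⟩⟩
  · -- lr-rl
    obtain ⟨a, ⟨h1, h2⟩ | ⟨h1, h2⟩⟩ := h <;> obtain ⟨a', ⟨h3, h4⟩ | ⟨h3, h4⟩⟩ := h'
    · exact lB1 (htB h1 ((hBC _ _).mpr (lC2 h2 h3))) h4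
    · exact htB (lB1 h1 (wCB (lC3 h2 h3))) h4
    · exact lB1 (lB2 h1 ((hBC _ _).mpr (htC h2 h3))) h4
    · exact htB (lB2 h1 ((hBC _ _).mpr (lC1 h2 h3))) h4
  · -- lr-rr
    obtain ⟨a, ⟨h1, h2⟩ | ⟨h1, h2⟩⟩ := h
    · exact ⟨a, Or.inr ⟨Or.inl h1, lC2 h2 h'⟩⟩
    · exact ⟨a, Or.inr ⟨h1, htC h2 h'⟩⟩
  · -- rl-ll
    obtain ⟨a, ⟨h1, h2⟩ | ⟨h1, h2⟩⟩ := h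
    · exact ⟨a, Or.inl ⟨h1, Or.inl (lB2 h2 h')⟩⟩
    · exact ⟨a, Or.inr ⟨h1, htB h2 h'⟩⟩
  · -- rl-lr
    obtain ⟨a, ⟨h1, h2⟩ | ⟨h1, h2⟩⟩ := h <;> obtain ⟨a', ⟨h3, h4⟩ | ⟨h3, h4⟩⟩ := h'
    · exact lC1 (htC h1 ((hBC _ _).mp (lB2 h2 h3))) h4
    · exact htC (lC1 h1 (wBC (lB3 h2 h3))) h4
    · exact lC1 (lC2 h1 ((hBC _ _).mp (htB h2 h3))) h4
    · exact htC (lC2 h1 ((hBC _ _).mp (lB1 h2 h3))) h4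
  · -- rr-rl
    obtain ⟨a, ⟨h1, h2⟩ | ⟨h1, h2⟩⟩ := h'
    · exact ⟨a, Or.inl ⟨htC h h1, h2⟩⟩
    · exact ⟨a, Or.inr ⟨Or.inl (lC1 h h1), h2⟩⟩
  · exact htC h h'

theorem auxT_resp_left (hf : Function.Injective f) (hg : Function.Injective g)
    (htB : Transitive sB) (htC : Transitive sC)
    (hBC : ∀ x y, sB (f x) (f y) ↔ sC (g x) (g y)) {x x' y : β ⊕ γ}
    (hr : amalgRel f g x x') (h : auxT f g sB sC x' y) : auxT f g sB sC x y := by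
  have lB1 : ∀ {x y z}, sB x y → (sB y z ∨ y = z) → sB x z := fun h h' =>
    h'.elim (htB h) (fun e => e ▸ h)
  have lB2 : ∀ {x y z}, (sB x y ∨ x = y) → sB y z → sB x z := fun h h' =>
    h.elim (fun h => htB h h') (fun e => e ▸ h')
  have lC1 : ∀ {x y z}, sC x y → (sC y z ∨ y = z) → sC x z := fun h h' =>
    h'.elim (htC h) (fun e => e ▸ h)
  have lC2 : ∀ {x y z}, (sC x y ∨ x = y) → sC y z → sC x z := fun h h' =>
    h.elim (fun h => htC h h') (fun e => e ▸ h')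
  have wBC : ∀ {x y}, (sB (f x) (f y) ∨ f x = f y) → (sC (g x) (g y) ∨ g x = g y) := fun h =>
    h.imp (fun h => (hBC _ _).mp h) (fun e => congrArg g (hf e))
  have wCB : ∀ {x y}, (sC (g x) (g y) ∨ g x = g y) → (sB (f x) (f y) ∨ f x = f y) := fun h =>
    h.imp (fun h => (hBC _ _).mpr h) (fun e => congrArg f (hg e))
  rcases hr with rfl | ⟨a, rfl, rfl⟩ | ⟨a, rfl, rfl⟩
  · exact h
  · -- x = inl (f a), x' = inr (g a)
    rcases y with b' | c' <;> simp only [auxT] at *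
    · obtain ⟨a', ⟨h1, h2⟩ | ⟨h1, h2⟩⟩ := h
      · exact lB1 ((hBC _ _).mpr h1) h2
      · exact lB2 (wCB h1) h2
    · exact ⟨a, Or.inr ⟨Or.inr rfl, h⟩⟩
  · -- x = inr (g a), x' = inl (f a)
    rcases y with b' | c' <;> simp only [auxT] at *
    · exact ⟨a, Or.inr ⟨Or.inr rfl, h⟩⟩
    · obtain ⟨a', ⟨h1, h2⟩ | ⟨h1, h2⟩⟩ := h
      · exact lC1 ((hBC _ _).mp h1) h2
      · exact lC2 (wBC h1) h2

theorem auxT_resp_right (hf : Function.Injective f) (hg : Function.Injective g)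
    (htB : Transitive sB) (htC : Transitive sC)
    (hBC : ∀ x y, sB (f x) (f y) ↔ sC (g x) (g y)) {x y y' : β ⊕ γ}
    (hr : amalgRel f g y y') (h : auxT f g sB sC x y') : auxT f g sB sC x y := by
  have lB1 : ∀ {x y z}, sB x y → (sB y z ∨ y = z) → sB x z := fun h h' =>
    h'.elim (htB h) (fun e => e ▸ h)
  have lB2 : ∀ {x y z}, (sB x y ∨ x = y) → sB y z → sB x z := fun h h' =>
    h.elim (fun h => htB h h') (fun e => e ▸ h')
  have lC1 : ∀ {x y z}, sC x y → (sC y z ∨ y = z) → sC x z := fun h h' =>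
    h'.elim (htC h) (fun e => e ▸ h)
  have lC2 : ∀ {x y z}, (sC x y ∨ x = y) → sC y z → sC x z := fun h h' =>
    h.elim (fun h => htC h h') (fun e => e ▸ h')
  have wBC : ∀ {x y}, (sB (f x) (f y) ∨ f x = f y) → (sC (g x) (g y) ∨ g x = g y) := fun h =>
    h.imp (fun h => (hBC _ _).mp h) (fun e => congrArg g (hf e))
  have wCB : ∀ {x y}, (sC (g x) (g y) ∨ g x = g y) → (sB (f x) (f y) ∨ f x = f y) := fun h =>
    h.imp (fun h => (hBC _ _).mpr h) (fun e => congrArg f (hg e))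
  rcases hr with rfl | ⟨a, rfl, rfl⟩ | ⟨a, rfl, rfl⟩
  · exact h
  · -- y = inl (f a), y' = inr (g a)
    rcases x with b | c <;> simp only [auxT] at *
    · obtain ⟨a', ⟨h1, h2⟩ | ⟨h1, h2⟩⟩ := h
      · exact lB1 h1 (wCB h2)
      · exact lB2 h1 ((hBC _ _).mpr h2)
    · exact ⟨a, Or.inl ⟨h, Or.inr rfl⟩⟩
  · -- y = inr (g a), y' = inl (f a)
    rcases x with b | c <;> simp only [auxT] at *
    · exact ⟨a, Or.inl ⟨h, Or.inr rfl⟩⟩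
    · obtain ⟨a', ⟨h1, h2⟩ | ⟨h1, h2⟩⟩ := h
      · exact lC1 h1 (wBC h2)
      · exact lC2 h1 ((hBC _ _).mp h2)

theorem auxT_step (hf : Function.Injective f) (hg : Function.Injective g)
    (htB : Transitive sB) (htC : Transitive sC)
    (hBC : ∀ x y, sB (f x) (f y) ↔ sC (g x) (g y)) {x y : β ⊕ γ}
    (h : amalgOrd f g sB sC (Quot.mk _ x) (Quot.mk _ y)) : auxT f g sB sC x y := by
  have heq := amalgRel_equivalence hf hg (f := f) (g := g)
  rcases h with ⟨b, b', hx, hy, hbb⟩ | ⟨c, c', hx, hy, hcc⟩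
  · have hx' : amalgRel f g x (Sum.inl b) := heq.eqvGen_iff.mp (Quot.eqvGen_exact hx)
    have hy' : amalgRel f g y (Sum.inl b') := heq.eqvGen_iff.mp (Quot.eqvGen_exact hy)
    exact auxT_resp_left hf hg htB htC hBC hx'
      (auxT_resp_right hf hg htB htC hBC hy' hbb)
  · have hx' : amalgRel f g x (Sum.inr c) := heq.eqvGen_iff.mp (Quot.eqvGen_exact hx)
    have hy' : amalgRel f g y (Sum.inr c') := heq.eqvGen_iff.mp (Quot.eqvGen_exact hy)
    exact auxT_resp_left hf hg htB htC hBC hx'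
      (auxT_resp_right hf hg htB htC hBC hy' hcc)

theorem auxT_of_transGen (hf : Function.Injective f) (hg : Function.Injective g)
    (htB : Transitive sB) (htC : Transitive sC)
    (hBC : ∀ x y, sB (f x) (f y) ↔ sC (g x) (g y)) {x y : β ⊕ γ}
    (h : Relation.TransGen (amalgOrd f g sB sC) (Quot.mk _ x) (Quot.mk _ y)) :
    auxT f g sB sC x y := by
  suffices H : ∀ q, Relation.TransGen (amalgOrd f g sB sC) (Quot.mk _ x) q →
      ∀ y, q = Quot.mk _ y → auxT f g sB sC x y from H _ h y rfl
  intro q h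
  induction h with
  | single h => intro y hy; subst hy; exact auxT_step hf hg htB htC hBC h
  | tail _ h2 ih =>
    intro y hy
    subst hy
    rename_i m _
    obtain ⟨m', rfl⟩ := Quot.exists_rep m
    exact auxT_trans hf hg htB htC hBC _ _ _ (ih m' rfl)
      (auxT_step hf hg htB htC hBC h2)

end Aux

/-- The class of linearly ordered posets `(P, ≺, <)` (a strict partial order `≺` together with
a strict linear order `<` extending it) has the amalgamation property with respect to
embeddings preserving both orders: the transitive closure `≺_D` of the union of the images of
`≺_B` and `≺_C` on the amalgamated set is a strict partial order, the canonical maps are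
embeddings with `k ∘ f = l ∘ g`, and there is a strict linear order `<_D` extending `≺_D` as
well as the images of `<_B` and `<_C`. -/
theorem orderedPoset_amalgamation {α : Type u} {β : Type v} {γ : Type w}
    (pA : α → α → Prop) (ltA : α → α → Prop)
    (hA : Irreflexive pA ∧ Transitive pA) (hlA : IsStrictTotalOrder α ltA)
    (hext : ∀ x y : α, pA x y → ltA x y)
    (pB : β → β → Prop) (ltB : β → β → Prop)
    (hB : Irreflexive pB ∧ Transitive pB) (hlB : IsStrictTotalOrder β ltB)
    (hextB : ∀ x y : β, pB x y → ltB x y)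
    (pC : γ → γ → Prop) (ltC : γ → γ → Prop)
    (hC : Irreflexive pC ∧ Transitive pC) (hlC : IsStrictTotalOrder γ ltC)
    (hextC : ∀ x y : γ, pC x y → ltC x y)
    (f : α → β) (hf : Function.Injective f) (hfp : ∀ x y : α, pA x y ↔ pB (f x) (f y))
    (hfl : ∀ x y : α, ltA x y ↔ ltB (f x) (f y))
    (g : α → γ) (hg : Function.Injective g) (hgp : ∀ x y : α, pA x y ↔ pC (g x) (g y))
    (hgl : ∀ x y : α, ltA x y ↔ ltC (g x) (g y)) :
    Irreflexive (Relation.TransGen (amalgOrd f g pB pC)) ∧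
    Transitive (Relation.TransGen (amalgOrd f g pB pC)) ∧
    Function.Injective (amalgInl f g) ∧
    (∀ b b' : β, pB b b' ↔
      Relation.TransGen (amalgOrd f g pB pC) (amalgInl f g b) (amalgInl f g b')) ∧
    Function.Injective (amalgInr f g) ∧
    (∀ c c' : γ, pC c c' ↔
      Relation.TransGen (amalgOrd f g pB pC) (amalgInr f g c) (amalgInr f g c')) ∧
    (∀ a : α, amalgInl f g (f a) = amalgInr f g (g a)) ∧
    ∃ ltD : Amalg f g → Amalg f g → Prop, IsStrictTotalOrder (Amalg f g) ltD ∧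
      (∀ x y : Amalg f g, Relation.TransGen (amalgOrd f g pB pC) x y → ltD x y) ∧
      (∀ b b' : β, ltB b b' ↔ ltD (amalgInl f g b) (amalgInl f g b')) ∧
      (∀ c c' : γ, ltC c c' ↔ ltD (amalgInr f g c) (amalgInr f g c')) := by
  have heq := amalgRel_equivalence hf hg (f := f) (g := g)
  have hpBC : ∀ x y, pB (f x) (f y) ↔ pC (g x) (g y) := fun x y =>
    (hfp x y).symm.trans (hgp x y)
  have hltBC : ∀ x y, ltB (f x) (f y) ↔ ltC (g x) (g y) := fun x y =>
    (hfl x y).symm.trans (hgl x y)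
  have htltB : Transitive ltB := fun _ _ _ h h' => hlB.trans _ _ _ h h'
  have htltC : Transitive ltC := fun _ _ _ h h' => hlC.trans _ _ _ h h'
  have hirltB : Irreflexive ltB := fun x => hlB.irrefl x
  have hirltC : Irreflexive ltC := fun x => hlC.irrefl x
  -- irreflexivity of the two transitive closures
  have irrP : Irreflexive (Relation.TransGen (amalgOrd f g pB pC)) := by
    intro q h
    obtain ⟨x, rfl⟩ := Quot.exists_rep q
    have := auxT_of_transGen hf hg hB.2 hC.2 hpBC h
    rcases x with b | c
    · exact hB.1 b this
    · exact hC.1 c this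
  have irrL : Irreflexive (Relation.TransGen (amalgOrd f g ltB ltC)) := by
    intro q h
    obtain ⟨x, rfl⟩ := Quot.exists_rep q
    have := auxT_of_transGen hf hg htltB htltC hltBC h
    rcases x with b | c
    · exact hirltB b this
    · exact hirltC c this
  refine ⟨irrP, fun _ _ _ h h' => h.trans h', ?_, ?_, ?_, ?_, ?_, ?_⟩
  · -- injectivity of amalgInl
    intro b b' h
    rcases heq.eqvGen_iff.mp (Quot.eqvGen_exact h) with h | ⟨a, h1, h2⟩ | ⟨a, h1, h2⟩
    · exact Sum.inl.inj h
    · exact absurd h2 (by simp)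
    · exact absurd h1 (by simp)
  · -- pB characterization
    intro b b'
    constructor
    · intro h; exact Relation.TransGen.single (Or.inl ⟨b, b', rfl, rfl, h⟩)
    · intro h; exact auxT_of_transGen hf hg hB.2 hC.2 hpBC h
  · -- injectivity of amalgInr
    intro c c' h
    rcases heq.eqvGen_iff.mp (Quot.eqvGen_exact h) with h | ⟨a, h1, h2⟩ | ⟨a, h1, h2⟩
    · exact Sum.inr.inj h
    · exact absurd h1 (by simp)
    · exact absurd h2 (by simp)
  · -- pC characterization
    intro c c'
    constructor
    · intro h; exact Relation.TransGen.single (Or.inr ⟨c, c', rfl, rfl, h⟩)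
    · intro h; exact auxT_of_transGen hf hg hB.2 hC.2 hpBC h
  · -- commuting square
    intro a
    exact Quot.sound (Or.inr (Or.inl ⟨a, rfl, rfl⟩))
  · -- the linear order
    set QL := Relation.TransGen (amalgOrd f g ltB ltC) with hQL
    have htQL : Transitive QL := fun _ _ _ h h' => h.trans h'
    let r : Amalg f g → Amalg f g → Prop := fun x y => x = y ∨ QL x y
    haveI : IsPartialOrder (Amalg f g) r := by
      refine { refl := fun x => Or.inl rfl, trans := ?_, antisymm := ?_ }
      · rintro x y z (rfl | h) (rfl | h')
        · exact Or.inl rfl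
        · exact Or.inr h'
        · exact Or.inr h
        · exact Or.inr (htQL h h')
      · intro x y h h'
        rcases h with rfl | h
        · rfl
        rcases h' with rfl | h'
        · rfl
        · exact absurd (htQL h h') (fun hh => irrL x hh)
    obtain ⟨s, hs, hrs⟩ := extend_partialOrder r
    have hs_total := hs.total
    have hs_antisymm : ∀ {x y}, s x y → s y x → x = y := fun h h' => hs.antisymm _ _ h h'
    have hs_trans : ∀ {x y z}, s x y → s y z → s x z := fun h h' => hs.trans _ _ _ h h'
    refine ⟨fun x y => s x y ∧ ¬ s y x, ?_, ?_, ?_, ?_⟩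
    · refine { trichotomous := ?_, irrefl := fun x h => h.2 h.1, trans := ?_ }
      · intro x y hn1 hn2
        by_contra hxy
        rcases hs_total x y with h | h
        · exact hn1 ⟨h, fun h' => hxy (hs_antisymm h h')⟩
        · exact hn2 ⟨h, fun h' => hxy (hs_antisymm h' h)⟩
      · rintro x y z ⟨h1, h2⟩ ⟨h3, h4⟩
        exact ⟨hs_trans h1 h3, fun h => h2 (hs_trans h3 h)⟩
    · -- extends TransGen (amalgOrd pB pC)
      intro x y h
      have hQ : QL x y := by
        refine Relation.TransGen.mono ?_ _ _ h
        rintro u v (⟨b, b', hu, hv, hbb⟩ | ⟨c, c', hu, hv, hcc⟩)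
        · exact Or.inl ⟨b, b', hu, hv, hextB _ _ hbb⟩
        · exact Or.inr ⟨c, c', hu, hv, hextC _ _ hcc⟩
      refine ⟨hrs _ _ (Or.inr hQ), fun h' => ?_⟩
      have : x = y := hs_antisymm (hrs _ _ (Or.inr hQ)) h'
      exact irrL x (this ▸ hQ)
    · -- extends ltB
      intro b b'
      have key : ∀ b b' : β, ltB b b' → s (amalgInl f g b) (amalgInl f g b') ∧
          ¬ s (amalgInl f g b') (amalgInl f g b) := by
        intro b b' h
        have hQ : QL (amalgInl f g b) (amalgInl f g b') :=
          Relation.TransGen.single (Or.inl ⟨b, b', rfl, rfl, h⟩)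
        refine ⟨hrs _ _ (Or.inr hQ), fun h' => ?_⟩
        have heq2 : amalgInl f g b = amalgInl f g b' :=
          hs_antisymm (hrs _ _ (Or.inr hQ)) h'
        exact irrL _ (heq2 ▸ hQ)
      constructor
      · exact key b b'
      · rintro ⟨h1, h2⟩
        rcases (haveI := hlB; trichotomous_of ltB b b') with h | rfl | h
        · exact h
        · exact absurd h1 h2
        · exact absurd (key b' b h).1 (fun hh => h2 hh)
    · -- extends ltC
      intro c c'
      have key : ∀ c c' : γ, ltC c c' → s (amalgInr f g c) (amalgInr f g c') ∧
          ¬ s (amalgInr f g c') (amalgInr f g c) := by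
        intro c c' h
        have hQ : QL (amalgInr f g c) (amalgInr f g c') :=
          Relation.TransGen.single (Or.inr ⟨c, c', rfl, rfl, h⟩)
        refine ⟨hrs _ _ (Or.inr hQ), fun h' => ?_⟩
        have heq2 : amalgInr f g c = amalgInr f g c' :=
          hs_antisymm (hrs _ _ (Or.inr hQ)) h'
        exact irrL _ (heq2 ▸ hQ)
      constructor
      · exact key c c'
      · rintro ⟨h1, h2⟩
        rcases (haveI := hlC; trichotomous_of ltC c c') with h | rfl | h
        · exact h
        · exact absurd h1 h2
        · exact absurd (key c' c h).1 (fun hh => h2 hh)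
end
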